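/- Let S be a set of 4 points in ℝ² in general position that are in convex position (all four are vertices of their convex hull). Then no edge of the convex hull of S is an exit edge of S; the only exit edges are the two diagonals. -/
import Mathlib


open Finset

/-- Points of the plane. -/
abbrev Pt := ℝ × ℝ

/-- Twice the signed area of the triangle `p q r` (orientation determinant). -/
def det3 (p q r : Pt) : ℝ := (q.1 - p.1) * (r.2 - p.2) - (q.2 - p.2) * (r.1 - p.1)

/-- A finite point set is in general position if no three distinct points are collinear. -/
def GenPos (S : Finset Pt) : Prop :=
  ∀ p ∈ S, ∀ q ∈ S, ∀ r ∈ S, p ≠ q → p ≠ r → q ≠ r → det3 p q r ≠ 0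

/-- The line through `u` and `v` strictly separates the points `x` and `y`. -/
def StrictSep (u v x y : Pt) : Prop := det3 u v x * det3 u v y < 0

/-- `ab` is an exit edge of `S` with witness `c`: no point `p ∈ S \ {a,b,c}` is such that
the line through `a` and `p` strictly separates `b` from `c`, or the line through `b`
and `p` strictly separates `a` from `c`. -/
def IsExitWitness (S : Finset Pt) (a b c : Pt) : Prop :=
  a ∈ S ∧ b ∈ S ∧ c ∈ S ∧ a ≠ b ∧ a ≠ c ∧ b ≠ c ∧
    ∀ p ∈ S, p ≠ a → p ≠ b → p ≠ c → ¬ StrictSep a p b c ∧ ¬ StrictSep b p a c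

/-- `ab` is an exit edge of `S` if it has some witness. -/
def IsExitEdge (S : Finset Pt) (a b : Pt) : Prop := ∃ c, IsExitWitness S a b c

/-- `ab` is an edge of the convex hull of `S`: all other points of `S` lie strictly on
one side of the line through `a` and `b`. -/
def IsHullEdge (S : Finset Pt) (a b : Pt) : Prop :=
  (∀ p ∈ S, p ≠ a → p ≠ b → 0 < det3 a b p) ∨ (∀ p ∈ S, p ≠ a → p ≠ b → det3 a b p < 0)

/-- The four points `p q r s`, in this cyclic order, are the vertices of a convex
quadrilateral traced counterclockwise. -/
def ConvexCCW4 (p q r s : Pt) : Prop :=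
  0 < det3 p q r ∧ 0 < det3 q r s ∧ 0 < det3 r s p ∧ 0 < det3 s p q

/-- `a, b, x, y` span a convex quadrilateral with `ab` as one of its edges. -/
def ConvexQuadOnEdge (a b x y : Pt) : Prop :=
  ConvexCCW4 a b x y ∨ ConvexCCW4 a b y x ∨ ConvexCCW4 b a x y ∨ ConvexCCW4 b a y x

/-- The open interior of the quadrilateral spanned by `a, b, x, y` (in convex position)
contains no point of `S`. -/
def QuadInteriorEmpty (S : Finset Pt) (a b x y : Pt) : Prop :=
  ∀ p ∈ S, p ∉ interior (convexHull ℝ ({a, b, x, y} : Set Pt))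

set_option maxHeartbeats 1000000 in
/-- For four points in convex position (counterclockwise order `a b c d`), no hull edge
is an exit edge, and both diagonals are exit edges. -/
theorem four_points_convex_position_exit_edges (S : Finset Pt) (a b c d : Pt)
    (hgp : GenPos S) (hS : S = {a, b, c, d}) (hcard : S.card = 4)
    (hconv : ConvexCCW4 a b c d) :
    ¬ IsExitEdge S a b ∧ ¬ IsExitEdge S b c ∧ ¬ IsExitEdge S c d ∧ ¬ IsExitEdge S d a ∧
      IsExitEdge S a c ∧ IsExitEdge S b d := by

  obtain ⟨h1, h4, hcda, hdab⟩ := hconv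
  have h2 : 0 < det3 a b d := by have e : det3 a b d = det3 d a b := by unfold det3; ring
                                 rw [e]; exact hdab
  have h3 : 0 < det3 a c d := by have e : det3 a c d = det3 c d a := by unfold det3; ring
                                 rw [e]; exact hcda
  have hne0 : ∀ {p q r : Pt}, det3 p q r ≠ 0 → p ≠ q ∧ p ≠ r ∧ q ≠ r := by
    intro p q r h
    refine ⟨?_, ?_, ?_⟩ <;> rintro rfl <;> exact h (by unfold det3; ring)
  obtain ⟨hab, hac, hbc⟩ := hne0 h1.ne'
  obtain ⟨-, had, hbd⟩ := hne0 h2.ne'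
  obtain ⟨-, -, hcd⟩ := hne0 h4.ne'
  have ma : a ∈ S := by rw [hS]; simp
  have mb : b ∈ S := by rw [hS]; simp
  have mc : c ∈ S := by rw [hS]; simp
  have md : d ∈ S := by rw [hS]; simp
  have hmem : ∀ p ∈ S, p = a ∨ p = b ∨ p = c ∨ p = d := by
    intro p hp; rw [hS] at hp; simpa using hp
  refine ⟨?_, ?_, ?_, ?_, ?_, ?_⟩
  · rintro ⟨w, -, -, hwS, -, h1w, h2w, hall⟩
    rcases hmem w hwS with rfl | rfl | rfl | rfl
    · exact h1w rfl
    · exact h2w rfl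
    · apply (hall d md had.symm hbd.symm hcd.symm).2
      have key := mul_pos h2 h4
      unfold StrictSep det3 at key ⊢; linarith [key]
    · apply (hall c mc hac.symm hbc.symm hcd).1
      have key := mul_pos h1 h3
      unfold StrictSep det3 at key ⊢; linarith [key]
  · rintro ⟨w, -, -, hwS, -, h1w, h2w, hall⟩
    rcases hmem w hwS with rfl | rfl | rfl | rfl
    · apply (hall d md hbd.symm hcd.symm had.symm).1
      have key := mul_pos h4 h2
      unfold StrictSep det3 at key ⊢; linarith [key]
    · exact h1w rfl
    · exact h2w rfl
    · apply (hall a ma hab hac had).2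
      have key := mul_pos h1 h3
      unfold StrictSep det3 at key ⊢; linarith [key]
  · rintro ⟨w, -, -, hwS, -, h1w, h2w, hall⟩
    rcases hmem w hwS with rfl | rfl | rfl | rfl
    · apply (hall b mb hbc hbd hab.symm).2
      have key := mul_pos h4 h2
      unfold StrictSep det3 at key ⊢; linarith [key]
    · apply (hall a ma hac had hab).1
      have key := mul_pos h3 h1
      unfold StrictSep det3 at key ⊢; linarith [key]
    · exact h1w rfl
    · exact h2w rfl
  · rintro ⟨w, -, -, hwS, -, h1w, h2w, hall⟩
    rcases hmem w hwS with rfl | rfl | rfl | rfl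
    · exact h2w rfl
    · apply (hall c mc hcd hac.symm hbc.symm).2
      have key := mul_pos h3 h1
      unfold StrictSep det3 at key ⊢; linarith [key]
    · apply (hall b mb hbd hab.symm hbc).1
      have key := mul_pos h2 h4
      unfold StrictSep det3 at key ⊢; linarith [key]
    · exact h1w rfl
  · refine ⟨b, ma, mc, mb, hac, hab, hbc.symm, ?_⟩
    intro p hp hpa hpc hpb
    rcases hmem p hp with rfl | rfl | rfl | rfl
    · exact absurd rfl hpa
    · exact absurd rfl hpb
    · exact absurd rfl hpc
    · constructor
      · intro h
        have key := mul_pos h3 h2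
        unfold StrictSep det3 at key h; linarith [key, h]
      · intro h
        have key := mul_pos h3 h4
        unfold StrictSep det3 at key h; linarith [key, h]
  · refine ⟨a, mb, md, ma, hbd, hab.symm, had.symm, ?_⟩
    intro p hp hpb hpd hpa
    rcases hmem p hp with rfl | rfl | rfl | rfl
    · exact absurd rfl hpa
    · exact absurd rfl hpb
    · constructor
      · intro h
        have key := mul_pos h4 h1
        unfold StrictSep det3 at key h; linarith [key, h]
      · intro h
        have key := mul_pos h4 h3
        unfold StrictSep det3 at key h; linarith [key, h]
    · exact absurd rfl hpd
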